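/- The equilibrium distribution of a negative binomial mixture NBM(π, p) with π = (f_N(1), f_N(2), ...) and E(N) < ∞ is again a negative binomial mixture NBM(π_e, p), where π_e = (f_{Ne}(1), f_{Ne}(2), ...) with f_{Ne}(j) = F̄_N(j-1)/E(N). That is, F̄_{S_N}(x)/E(S_N) = ∑_{j=1}^∞ (F̄_N(j-1)/E(N))·nb(j,p)(x) for all x ≥ 0. -/

import Mathlib

/-- The negative binomial probability function `nb(k,p)(x) = C(k+x-1,x) p^k (1-p)^x`. -/
noncomputable def nb (k : ℕ) (p : ℝ) (x : ℕ) : ℝ :=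
  (Nat.choose (k + x - 1) x : ℝ) * p ^ k * (1 - p) ^ x

/-- The equilibrium distribution of a negative binomial mixture `NBM(π, p)` with
`π = (f 1, f 2, ...)` and `E(N) < ∞` is again a negative binomial mixture
`NBM(π_e, p)` with `f_Ne j = F̄_N(j-1)/E(N)`: for all `x ≥ 0`,
`F̄_{S_N}(x) / E(S_N) = ∑_{j≥1} (F̄_N(j-1)/E(N)) · nb(j,p)(x)`,
where `E(S_N) = E(N)(1-p)/p`. -/
lemma nb_nonneg {p : ℝ} (h0 : 0 ≤ p) (h1 : p ≤ 1) (k x : ℕ) : 0 ≤ nb k p x := by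
  unfold nb
  have : (0:ℝ) ≤ 1 - p := by linarith
  positivity

lemma lemA {p : ℝ} (hp0 : 0 < p) (k x : ℕ) :
    ∑ y ∈ Finset.range (x + 1), (nb k p y - nb (k + 1) p y)
      = (1 - p) / p * nb (k + 1) p x := by
  induction x with
  | zero =>
      simp only [zero_add, Finset.sum_range_one, nb]
      simp only [Nat.choose_zero_right, pow_zero]
      have h1 : k + 0 - 1 = k - 1 := by omega
      field_simp
      ring
  | succ x ih =>
      rw [Finset.sum_range_succ, ih]
      have e1 : k + (x + 1) - 1 = k + x := by omega
      have e2 : (k + 1) + x - 1 = k + x := by omega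
      have e3 : (k + 1) + (x + 1) - 1 = k + x + 1 := by omega
      have pas : ((k + x + 1).choose (x + 1) : ℝ) = (k + x).choose x + (k + x).choose (x + 1) := by
        have := Nat.succ_sub_one (k+x)
        rw [show k + x + 1 = (k+x).succ from rfl, show x + 1 = x.succ from rfl,
          Nat.choose_succ_succ]
        push_cast; ring
      simp only [nb, e1, e2, e3, pas]
      field_simp
      ring

lemma lemB {p : ℝ} (hp0 : 0 < p) (k x : ℕ) :
    ∑ y ∈ Finset.range (x + 1), nb k p y
      = 1 - (1 - p) / p * ∑ j ∈ Finset.range k, nb (j + 1) p x := by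
  induction k with
  | zero =>
      simp only [Finset.range_zero, Finset.sum_empty, mul_zero, sub_zero]
      rw [Finset.sum_eq_single 0]
      · simp [nb]
      · intro y _ hy
        have hy1 : 1 ≤ y := Nat.one_le_iff_ne_zero.2 hy
        have : (0 + y - 1).choose y = 0 := Nat.choose_eq_zero_of_lt (by omega)
        rw [nb, this]
        simp
      · intro h; simp at h
  | succ k ih =>
      have hA := lemA hp0 k x
      rw [Finset.sum_sub_distrib] at hA
      have : ∑ y ∈ Finset.range (x + 1), nb (k + 1) p y
          = ∑ y ∈ Finset.range (x + 1), nb k p y - (1 - p) / p * nb (k + 1) p x := by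
        linarith
      rw [this, ih, Finset.sum_range_succ]
      ring

lemma swap_lemma (f c : ℕ → ℝ) (hf : ∀ k, 0 ≤ f k) (hc : ∀ j, 0 ≤ c j)
    (Sf : Summable f)
    (SfC : Summable fun k => f k * ∑ j ∈ Finset.range k, c j) :
    Summable (fun j => (∑' i : ℕ, f (i + (j + 1))) * c j) ∧
    ∑' k : ℕ, f k * ∑ j ∈ Finset.range k, c j
      = ∑' j : ℕ, (∑' i : ℕ, f (i + (j + 1))) * c j := by
  set g : ℕ → ℕ → ENNReal := fun k j => if j < k then ENNReal.ofReal (f k * c j) else 0 with hg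
  have h1 : ∀ k, ∑' j, g k j = ENNReal.ofReal (f k * ∑ j ∈ Finset.range k, c j) := by
    intro k
    rw [tsum_eq_sum (s := Finset.range k) (by
      intro j hj
      simp only [hg]
      rw [if_neg]; simpa using hj)]
    rw [Finset.mul_sum, ENNReal.ofReal_sum_of_nonneg (fun j _ => mul_nonneg (hf k) (hc j))]
    apply Finset.sum_congr rfl
    intro j hj
    simp only [hg]
    rw [if_pos (Finset.mem_range.1 hj)]
  have h2 : ∀ j, ∑' k, g k j = ENNReal.ofReal ((∑' i : ℕ, f (i + (j + 1))) * c j) := by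
    intro j
    have hinj : Function.Injective (fun i : ℕ => i + (j + 1)) := fun a b h => by simpa using h
    rw [← Function.Injective.tsum_eq hinj (f := fun k => g k j) (by
      intro k hk
      have hjk : j < k := by
        by_contra h
        apply hk
        show g k j = 0
        simp only [hg]
        rw [if_neg h]
      exact Set.mem_range.2 ⟨k - (j+1), by show k - (j+1) + (j+1) = k; omega⟩)]
    have hsum : Summable (fun i : ℕ => f (i + (j + 1)) * c j) :=
      ((summable_nat_add_iff (j + 1)).2 Sf).mul_right (c j)
    have : ∀ i : ℕ, g (i + (j + 1)) j = ENNReal.ofReal (f (i + (j + 1)) * c j) := by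
      intro i
      simp only [hg]
      rw [if_pos (by omega)]
    rw [tsum_congr this, ← ENNReal.ofReal_tsum_of_nonneg (fun i => mul_nonneg (hf _) (hc j)) hsum,
      tsum_mul_right]
  have key : ENNReal.ofReal (∑' k : ℕ, f k * ∑ j ∈ Finset.range k, c j)
      = ∑' j, ENNReal.ofReal ((∑' i : ℕ, f (i + (j + 1))) * c j) := by
    rw [ENNReal.ofReal_tsum_of_nonneg
      (fun k => mul_nonneg (hf k) (Finset.sum_nonneg fun j _ => hc j)) SfC]
    simp only [← h1]
    rw [ENNReal.tsum_comm]
    simp only [h2]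
  have hnn : ∀ j, 0 ≤ (∑' i : ℕ, f (i + (j + 1))) * c j := fun j =>
    mul_nonneg (tsum_nonneg fun i => hf _) (hc j)
  have hne : ∑' j, ENNReal.ofReal ((∑' i : ℕ, f (i + (j + 1))) * c j) ≠ ⊤ := by
    rw [← key]; exact ENNReal.ofReal_ne_top
  have hS : Summable (fun j => (∑' i : ℕ, f (i + (j + 1))) * c j) := by
    have := ENNReal.summable_toReal hne
    refine this.congr fun j => ?_
    rw [ENNReal.toReal_ofReal (hnn j)]
  refine ⟨hS, ?_⟩
  rw [← ENNReal.ofReal_tsum_of_nonneg hnn hS] at key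
  exact (ENNReal.ofReal_eq_ofReal_iff
    (tsum_nonneg fun k => mul_nonneg (hf k) (Finset.sum_nonneg fun j _ => hc j))
    (tsum_nonneg hnn)).1 key


theorem nbm_equilibrium (p : ℝ) (hp0 : 0 < p) (hp1 : p < 1)
    (f : ℕ → ℝ) (hf0 : f 0 = 0) (hf : ∀ k, 0 ≤ f k) (hfsum : ∑' k : ℕ, f k = 1)
    (EN : ℝ) (hEN : EN = ∑' k : ℕ, (k : ℝ) * f k)
    (hENsum : Summable fun k : ℕ => (k : ℝ) * f k)
    (x : ℕ) :
    (1 - ∑ y ∈ Finset.range (x + 1), ∑' k : ℕ, f k * nb k p y) / (EN * (1 - p) / p) =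
      ∑' j : ℕ, ((1 - ∑ k ∈ Finset.range (j + 1), f k) / EN) * nb (j + 1) p x := by
  have hp : (0:ℝ) < 1 - p := by linarith
  have hq : (0:ℝ) < (1 - p) / p := div_pos hp hp0
  have hnb : ∀ k y, 0 ≤ nb k p y := nb_nonneg hp0.le hp1.le
  have Sf : Summable f := by
    by_contra h
    rw [tsum_eq_zero_of_not_summable h] at hfsum
    norm_num at hfsum
  set M : ℝ := p / (1 - p) with hM
  have hM0 : 0 < M := div_pos hp0 hp
  have hqC : ∀ k y, (1 - p) / p * ∑ j ∈ Finset.range k, nb (j + 1) p y ≤ 1 := by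
    intro k y
    have hB := lemB hp0 k y
    have h0 : 0 ≤ ∑ y' ∈ Finset.range (y + 1), nb k p y' :=
      Finset.sum_nonneg fun _ _ => hnb _ _
    linarith
  have hMeq : M = 1 / ((1 - p) / p) := by rw [one_div_div]
  have hnb_le : ∀ k y, nb k p y ≤ max 1 M := by
    intro k y
    cases k with
    | zero =>
      refine le_trans ?_ (le_max_left 1 M)
      cases y with
      | zero => simp [nb]
      | succ y =>
        have h0 : (0 + (y + 1) - 1).choose (y + 1) = 0 :=
          Nat.choose_eq_zero_of_lt (by omega)
        rw [nb, h0]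
        norm_num
    | succ k =>
      refine le_trans ?_ (le_max_right 1 M)
      have hsingle : nb (k + 1) p y ≤ ∑ j ∈ Finset.range (k + 1), nb (j + 1) p y :=
        Finset.single_le_sum (f := fun j => nb (j + 1) p y) (fun j _ => hnb _ _)
          (Finset.self_mem_range_succ k)
      have h2 : (1 - p) / p * nb (k + 1) p y ≤ 1 :=
        le_trans (mul_le_mul_of_nonneg_left hsingle hq.le) (hqC (k + 1) y)
      rw [hMeq]
      rw [le_div_iff₀ hq]
      linarith
  set c : ℕ → ℝ := fun j => nb (j + 1) p x with hc
  set C : ℕ → ℝ := fun k => ∑ j ∈ Finset.range k, c j with hC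
  have hC0 : ∀ k, 0 ≤ C k := fun k => Finset.sum_nonneg fun j _ => hnb _ _
  have hCle : ∀ k, C k ≤ M := by
    intro k
    have := hqC k x
    rw [hMeq, le_div_iff₀ hq]
    linarith
  have hSnb : ∀ y, Summable fun k => f k * nb k p y := by
    intro y
    refine Summable.of_nonneg_of_le (fun k => mul_nonneg (hf k) (hnb k y))
      (fun k => mul_le_mul_of_nonneg_left (hnb_le k y) (hf k)) (Sf.mul_right (max 1 M))
  have SfC : Summable fun k => f k * C k := by
    refine Summable.of_nonneg_of_le (fun k => mul_nonneg (hf k) (hC0 k))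
      (fun k => mul_le_mul_of_nonneg_left (hCle k) (hf k)) (Sf.mul_right M)
  -- numerator computation
  have e1 : ∑ y ∈ Finset.range (x + 1), ∑' k : ℕ, f k * nb k p y
      = ∑' k : ℕ, ∑ y ∈ Finset.range (x + 1), f k * nb k p y :=
    (Summable.tsum_finsetSum fun y _ => hSnb y).symm
  have e2 : ∀ k, ∑ y ∈ Finset.range (x + 1), f k * nb k p y
      = f k - (1 - p) / p * (f k * C k) := by
    intro k
    rw [← Finset.mul_sum, lemB hp0 k x]
    ring
  have e3 : ∑' k : ℕ, ∑ y ∈ Finset.range (x + 1), f k * nb k p y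
      = 1 - (1 - p) / p * ∑' k : ℕ, f k * C k := by
    rw [tsum_congr e2, Summable.tsum_sub Sf (SfC.mul_left ((1 - p) / p)), hfsum, tsum_mul_left]
  obtain ⟨hSB, hAB⟩ := swap_lemma f c hf (fun j => hnb _ _) Sf SfC
  have hT : ∀ j, (∑' i : ℕ, f (i + (j + 1))) = 1 - ∑ k ∈ Finset.range (j + 1), f k := by
    intro j
    have h := Summable.sum_add_tsum_nat_add (f := f) (j + 1) Sf
    rw [hfsum] at h
    linarith
  have hEN1 : (1:ℝ) ≤ EN := by
    rw [hEN, ← hfsum]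
    refine Summable.tsum_le_tsum (fun k => ?_) Sf hENsum
    cases k with
    | zero => rw [hf0]; norm_num
    | succ k =>
      have : (1:ℝ) ≤ ((k + 1 : ℕ) : ℝ) := by exact_mod_cast Nat.one_le_iff_ne_zero.2 (by omega)
      nlinarith [hf (k + 1)]
  have hEN0 : EN ≠ 0 := by linarith
  -- put it together
  rw [e1, e3]
  have hRHS : ∑' j : ℕ, ((1 - ∑ k ∈ Finset.range (j + 1), f k) / EN) * nb (j + 1) p x
      = (∑' j : ℕ, (∑' i : ℕ, f (i + (j + 1))) * c j) / EN := by
    rw [← tsum_div_const]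
    refine tsum_congr fun j => ?_
    rw [hT j, hc]
    ring
  rw [hRHS, ← hAB]
  have hB0 : (1:ℝ) - (1 - (1 - p) / p * ∑' k : ℕ, f k * C k) = (1 - p) / p * ∑' k : ℕ, f k * C k := by
    ring
  rw [hB0]
  rw [div_eq_div_iff (by positivity) (by linarith)]
  field_simp
  ring
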